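/- With R₀ as above, for every integer l ≥ 0: (d_{β−α−1}(q)^l / l!) · (d^l/du^l R₀)(u)|_{u=1} lies in ℤ[q, q⁻¹], where d_N(q) = lcm(q−1, …, q^N−1). -/

import Mathlib

open Finset

/-- The rational function
`R₀(u) = (1−u)(q;q)_{β−α−1}/(q^{α−γ}u;q)_{β−α}
       = (q;q)_{β−α−1} / ∏_{α ≤ j ≤ β−1, j ≠ γ} (1 − q^{j−γ}u)`
(the `(1-u)` factor cancels the `j = γ` factor of the denominator),
as a real function of `u`. -/
noncomputable def R0 (q : ℝ) (α β γ : ℤ) (u : ℝ) : ℝ :=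
  (∏ i ∈ Finset.range (β - α - 1).toNat, (1 - q * q ^ i)) /
    ∏ j ∈ (Finset.Icc α (β - 1)).erase γ, (1 - q ^ (j - γ) * u)

/-- `d_N(q) = ∏_{t=1}^N Φ_t(q)`, the lcm of `q−1, …, q^N−1`, evaluated at a real `q`. -/
noncomputable def dN (N : ℕ) (q : ℝ) : ℝ :=
  ∏ t ∈ Finset.Icc 1 N, (Polynomial.cyclotomic t ℝ).eval q

namespace Stmt15Aux

open Polynomial

/-- `pp n = ∏_{t=1}^n (1 - X^t)` over `ℤ`. -/
noncomputable def pp (n : ℕ) : Polynomial ℤ := ∏ t ∈ range n, (1 - X ^ (t + 1))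

/-- Gaussian binomial coefficients as integer polynomials. -/
noncomputable def gb : ℕ → ℕ → Polynomial ℤ
  | 0, 0 => 1
  | 0, _ + 1 => 0
  | _ + 1, 0 => 1
  | n + 1, k + 1 => gb n k + X ^ (k + 1) * gb n (k + 1)

lemma gb_zero_right (n : ℕ) : gb n 0 = 1 := by cases n <;> rfl

lemma gb_eq_zero : ∀ {n k : ℕ}, n < k → gb n k = 0 := by
  intro n
  induction n with
  | zero => intro k h; match k, h with | k + 1, _ => rfl
  | succ n ih =>
    intro k h
    match k, h with
    | k + 1, h =>
      show gb n k + X ^ (k + 1) * gb n (k + 1) = 0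
      rw [ih (by omega), ih (by omega)]; ring

lemma gb_mul : ∀ n k : ℕ, k ≤ n → gb n k * (pp k * pp (n - k)) = pp n := by
  intro n
  induction n with
  | zero => intro k hk; interval_cases k; simp [gb, pp]
  | succ n ih =>
    intro k hk
    have hpp : ∀ m : ℕ, pp (m + 1) = pp m * (1 - X ^ (m + 1)) := fun m => prod_range_succ _ m
    match k with
    | 0 => simp [gb_zero_right, pp]
    | k + 1 =>
      show (gb n k + X ^ (k + 1) * gb n (k + 1)) * (pp (k + 1) * pp (n + 1 - (k + 1))) = pp (n + 1)
      have hnk : n + 1 - (k + 1) = n - k := by omega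
      rw [hnk]
      rcases eq_or_lt_of_le hk with h | h
      · -- k + 1 = n + 1
        have hk' : k = n := by omega
        subst hk'
        rw [gb_eq_zero (Nat.lt_succ_self k)]
        have h0 : k - k = 0 := by omega
        have i1 := ih k le_rfl
        rw [h0] at i1 ⊢
        have hpp0 : pp 0 = 1 := rfl
        rw [hpp0, mul_one] at i1
        rw [hpp0, hpp k]
        calc (gb k k + X ^ (k + 1) * 0) * (pp k * (1 - X ^ (k + 1)) * 1)
            = gb k k * pp k * (1 - X ^ (k + 1)) := by ring
          _ = pp k * (1 - X ^ (k + 1)) := by rw [i1]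
      · have hk1 : k ≤ n := by omega
        have hk2 : k + 1 ≤ n := by omega
        have e1 : pp (k + 1) = pp k * (1 - X ^ (k + 1)) := hpp k
        have e2 : pp (n - k) = pp (n - (k + 1)) * (1 - X ^ (n - k)) := by
          have h3 : n - k = (n - (k + 1)) + 1 := by omega
          have h5 : n - (k + 1) + 1 = n - k := by omega
          conv_lhs => rw [h3]
          rw [hpp, h5]
        have i1 := ih k hk1
        have i2 := ih (k + 1) hk2
        have key : (1 - (X : Polynomial ℤ) ^ (k + 1)) + X ^ (k + 1) * (1 - X ^ (n - k)) = 1 - X ^ (n + 1) := by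
          have h4 : k + 1 + (n - k) = n + 1 := by omega
          rw [← h4, pow_add]
          ring
        calc (gb n k + X ^ (k + 1) * gb n (k + 1)) * (pp (k + 1) * pp (n - k))
            = gb n k * (pp k * pp (n - k)) * (1 - X ^ (k + 1))
              + X ^ (k + 1) * (gb n (k + 1) * (pp (k + 1) * pp (n - (k + 1)))) * (1 - X ^ (n - k)) := by
              rw [e1, e2]
              ring
          _ = pp n * ((1 - X ^ (k + 1)) + X ^ (k + 1) * (1 - X ^ (n - k))) := by rw [i1, i2]; ring
          _ = pp (n + 1) := by rw [key, hpp]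


/-- `DD N = ∏_{t=1}^N Φ_t` over `ℤ`. -/
noncomputable def DD (N : ℕ) : Polynomial ℤ := ∏ t ∈ Finset.Icc 1 N, cyclotomic t ℤ

lemma dvd_DD {t N : ℕ} (h1 : 1 ≤ t) (h2 : t ≤ N) : (X ^ t - 1 : Polynomial ℤ) ∣ DD N := by
  rw [← prod_cyclotomic_eq_X_pow_sub_one (by omega) ℤ]
  exact Finset.prod_dvd_prod_of_subset _ _ _ (fun d hd => by
    rw [Nat.mem_divisors] at hd
    rw [Finset.mem_Icc]
    exact ⟨Nat.pos_of_dvd_of_pos hd.1 (by omega), le_trans (Nat.le_of_dvd (by omega) hd.1) h2⟩)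

/-- Witness for the divisibility `(X^t - 1) ∣ DD N`. -/
noncomputable def Wit (t N : ℕ) : Polynomial ℤ :=
  if h : 1 ≤ t ∧ t ≤ N then (dvd_DD h.1 h.2).choose else 0

lemma Wit_spec {t N : ℕ} (h1 : 1 ≤ t) (h2 : t ≤ N) : DD N = (X ^ t - 1) * Wit t N := by
  rw [Wit, dif_pos (⟨h1, h2⟩ : 1 ≤ t ∧ t ≤ N)]
  exact (dvd_DD h1 h2).choose_spec

lemma aeval_DD (N : ℕ) (q : ℝ) : (aeval q) (DD N) = dN N q := by
  rw [DD, dN, map_prod]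
  refine Finset.prod_congr rfl fun t _ => ?_
  rw [aeval_def, eval₂_eq_eval_map]
  norm_num [map_cyclotomic]

lemma aeval_pp (n : ℕ) (q : ℝ) : (aeval q) (pp n) = ∏ i ∈ range n, (1 - q * q ^ i) := by
  rw [pp, map_prod]
  refine Finset.prod_congr rfl fun t _ => ?_
  simp [pow_succ']

lemma zpow_prod (q : ℝ) (hq : q ≠ 0) (n : ℕ) (g : ℕ → ℤ) :
    ∏ j ∈ range n, q ^ (g j) = q ^ (∑ j ∈ range n, g j) := by
  induction n with
  | zero => simp
  | succ n ih => rw [prod_range_succ, sum_range_succ, ih, zpow_add₀ hq]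


lemma isOpen_cond (s : Finset ℤ) (a : ℤ → ℝ) : IsOpen {x : ℝ | ∀ k ∈ s, 1 - a k * x ≠ 0} := by
  have : {x : ℝ | ∀ k ∈ s, 1 - a k * x ≠ 0} = ⋂ k ∈ s, {x : ℝ | 1 - a k * x ≠ 0} := by
    ext x; simp
  rw [this]
  refine isOpen_biInter_finset fun k _ => ?_
  have hc : Continuous fun x : ℝ => 1 - a k * x := by continuity
  exact isOpen_compl_singleton.preimage hc

lemma iteratedDeriv_sum_inv (s : Finset ℤ) (a w : ℤ → ℝ) (l : ℕ) :
    ∀ u : ℝ, (∀ k ∈ s, 1 - a k * u ≠ 0) →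
    iteratedDeriv l (fun x => ∑ k ∈ s, w k * (1 - a k * x)⁻¹) u
      = ∑ k ∈ s, w k * ((l.factorial : ℝ) * a k ^ l * ((1 - a k * u)⁻¹) ^ (l + 1)) := by
  induction l with
  | zero => intro u hu; simp
  | succ l ih =>
    intro u hu
    rw [iteratedDeriv_succ]
    have hev : iteratedDeriv l (fun x => ∑ k ∈ s, w k * (1 - a k * x)⁻¹)
        =ᶠ[nhds u] fun x => ∑ k ∈ s, w k * ((l.factorial : ℝ) * a k ^ l * ((1 - a k * x)⁻¹) ^ (l + 1)) :=
      Filter.eventually_of_mem ((isOpen_cond s a).mem_nhds hu) (fun x hx => ih x hx)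
    rw [hev.deriv_eq]
    have hd : HasDerivAt
        (fun x => ∑ k ∈ s, w k * ((l.factorial : ℝ) * a k ^ l * ((1 - a k * x)⁻¹) ^ (l + 1)))
        (∑ k ∈ s, w k * ((l.factorial : ℝ) * a k ^ l *
          ((l + 1 : ℕ) * ((1 - a k * u)⁻¹) ^ (l + 1 - 1) * (-(-(a k)) / (1 - a k * u) ^ 2)))) u := by
      refine HasDerivAt.fun_sum fun k hk => ?_
      have h1 : HasDerivAt (fun x : ℝ => 1 - a k * x) (-(a k)) u := by
        simpa using ((hasDerivAt_id u).const_mul (a k)).const_sub 1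
      have h2 := h1.inv (hu k hk)
      have h3 := h2.pow (l + 1)
      exact (h3.const_mul ((l.factorial : ℝ) * a k ^ l)).const_mul (w k)
    rw [hd.deriv]
    refine Finset.sum_congr rfl fun k hk => ?_
    have h0 := hu k hk
    have hl : l + 1 - 1 = l := by omega
    rw [hl]
    rw [Nat.factorial_succ]
    push_cast
    rw [neg_neg, div_eq_mul_inv, ← inv_pow]
    ring


/-- coefficient of the partial fraction decomposition of `R0`. -/
noncomputable def wcoef (q : ℝ) (α β γ k : ℤ) : ℝ :=
  (∏ i ∈ Finset.range (β - α - 1).toNat, (1 - q * q ^ i)) * (1 - q ^ (γ - k)) *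
    ∏ i ∈ (Finset.Icc α (β - 1)).erase k, (1 - q ^ (i - k))⁻¹

section Step1

variable {q : ℝ} {α β γ : ℤ}

lemma sf_eq (hq0 : q ≠ 0) (hqz : ∀ s : ℤ, s ≠ 0 → q ^ s ≠ (1 : ℝ))
    (hαγ : α ≤ γ) (hγβ : γ < β) (hN : α + 1 < β) (u : ℝ) :
    ∑ k ∈ ((Finset.Icc α (β - 1)).erase γ), wcoef q α β γ k *
        ∏ i ∈ (((Finset.Icc α (β - 1)).erase γ).erase k), (1 - q ^ (i - γ) * u)
      = ∏ i ∈ Finset.range (β - α - 1).toNat, (1 - q * q ^ i) := by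
  set v : ℤ → ℝ := fun i => q ^ (γ - i) with hv
  set C : ℝ := ∏ i ∈ Finset.range (β - α - 1).toNat, (1 - q * q ^ i) with hCdef
  set S : Finset ℤ := (Finset.Icc α (β - 1)).erase γ with hS
  have hvne : ∀ i, v i ≠ 0 := fun i => zpow_ne_zero _ hq0
  have hvγ : v γ = 1 := by simp [hv]
  have hvk1 : ∀ k ∈ S, v k ≠ 1 := by
    intro k hk
    exact hqz (γ - k) (by rw [Finset.mem_erase] at hk; omega)
  have hvik : ∀ i k : ℤ, v i - v k = v i * (1 - q ^ (i - k)) := by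
    intro i k
    have : v i * q ^ (i - k) = v k := by
      rw [hv, ← zpow_add₀ hq0]
      congr 1
      ring
    rw [mul_sub, mul_one, this]
  have hgfact : ∀ i k : ℤ, (v k - v i)⁻¹ * (-v i) = (1 - q ^ (i - k))⁻¹ := by
    intro i k
    rw [show v k - v i = -(v i - v k) by ring, inv_neg, neg_mul_neg, hvik i k, mul_inv,
      mul_comm ((v i)⁻¹) _, mul_assoc, inv_mul_cancel₀ (hvne i), mul_one]
  -- the main algebraic identity, for u ≠ 1
  have hmain : ∀ u : ℝ, u ≠ 1 → ∑ k ∈ S, wcoef q α β γ k *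
      ∏ i ∈ (S.erase k), (1 - q ^ (i - γ) * u) = C := by
    intro u hu1
    have hinj : Set.InjOn v (Finset.Icc α (β - 1)) := by
      intro i _ j _ hij
      by_contra hne
      refine hqz (j - i) (by omega) ?_
      have : v i / v j = 1 := by rw [hij, div_self (hvne j)]
      rw [hv] at this
      rw [← this, ← zpow_sub₀ hq0]
      congr 1
      ring
    have hcard : (1 : ℕ) < (Finset.Icc α (β - 1)).card := by
      rw [Int.card_Icc]
      omega
    have hdeg : (1 - X : Polynomial ℝ).degree < (Finset.Icc α (β - 1)).card := by
      have h1 : (1 - X : Polynomial ℝ).degree = 1 := by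
        rw [show (1 - X : Polynomial ℝ) = -(X - Polynomial.C 1) by rw [Polynomial.C_1]; ring,
          Polynomial.degree_neg, Polynomial.degree_X_sub_C]
      rw [h1]
      exact_mod_cast hcard
    have hlag := Lagrange.eq_interpolate (v := v) hinj hdeg
    have hlagu : (1 : ℝ) - u = ∑ k ∈ Finset.Icc α (β - 1), (1 - v k) *
        ∏ i ∈ ((Finset.Icc α (β - 1)).erase k), ((v k - v i)⁻¹ * (u - v i)) := by
      have h0 : (1 : ℝ) - u = Polynomial.eval u
          ((Lagrange.interpolate (Finset.Icc α (β - 1)) v) fun i =>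
            Polynomial.eval (v i) (1 - X)) := by
        rw [← hlag]; simp
      rw [h0, Lagrange.interpolate_apply, Polynomial.eval_finset_sum]
      refine Finset.sum_congr rfl fun k hk => ?_
      rw [Polynomial.eval_mul, Polynomial.eval_C, Lagrange.basis, Polynomial.eval_prod]
      congr 1
      · simp
      · exact Finset.prod_congr rfl fun i _ => by simp [Lagrange.basisDivisor]
    -- drop the γ term
    have hγIcc : γ ∈ Finset.Icc α (β - 1) := by rw [Finset.mem_Icc]; omega
    have hdrop : ∑ k ∈ Finset.Icc α (β - 1), (1 - v k) *
          ∏ i ∈ ((Finset.Icc α (β - 1)).erase k), ((v k - v i)⁻¹ * (u - v i))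
        = ∑ k ∈ S, (1 - v k) *
          ∏ i ∈ ((Finset.Icc α (β - 1)).erase k), ((v k - v i)⁻¹ * (u - v i)) := by
      rw [hS]
      rw [Finset.sum_erase _ (by simp [hvγ])]
    -- rewrite each term
    have hterm : ∀ k ∈ S, (1 - v k) *
          ∏ i ∈ ((Finset.Icc α (β - 1)).erase k), ((v k - v i)⁻¹ * (u - v i))
        = -(u - 1) * ((∏ i ∈ S.erase k, ((v k - v i)⁻¹ * (-v i))) *
            ∏ i ∈ S.erase k, (1 - q ^ (i - γ) * u)) := by
      intro k hk
      have hkS := hk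
      rw [hS, Finset.mem_erase, Finset.mem_Icc] at hkS
      have hγek : γ ∈ (Finset.Icc α (β - 1)).erase k := by
        rw [Finset.mem_erase]
        exact ⟨fun h => hkS.1 h.symm, hγIcc⟩
      rw [← Finset.mul_prod_erase _ _ hγek, Finset.erase_right_comm, ← hS, hvγ]
      have hfac : ∀ i : ℤ, u - v i = (-v i) * (1 - q ^ (i - γ) * u) := by
        intro i
        have h1 : v i * q ^ (i - γ) = 1 := by
          rw [hv, ← zpow_add₀ hq0, show γ - i + (i - γ) = 0 by ring, zpow_zero]
        have h2 : v i * (q ^ (i - γ) * u) = u := by rw [← mul_assoc, h1, one_mul]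
        rw [neg_mul, mul_sub, mul_one, h2]
        ring
      have hsplit : ∏ i ∈ S.erase k, ((v k - v i)⁻¹ * (u - v i))
          = (∏ i ∈ S.erase k, ((v k - v i)⁻¹ * (-v i))) *
            ∏ i ∈ S.erase k, (1 - q ^ (i - γ) * u) := by
        rw [← Finset.prod_mul_distrib]
        refine Finset.prod_congr rfl fun i _ => ?_
        rw [hfac i]
        ring
      rw [hsplit]
      have h1k : (1 - v k) * ((v k - 1)⁻¹ * (u - 1)) = -(u - 1) := by
        rw [show v k - 1 = -(1 - v k) by ring, inv_neg]
        have : (1 - v k) ≠ 0 := sub_ne_zero_of_ne fun h => (hvk1 k hk) h.symm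
        field_simp
      calc (1 - v k) * ((v k - 1)⁻¹ * (u - 1) *
              ((∏ i ∈ S.erase k, ((v k - v i)⁻¹ * (-v i))) * ∏ i ∈ S.erase k, (1 - q ^ (i - γ) * u)))
          = ((1 - v k) * ((v k - 1)⁻¹ * (u - 1))) *
              ((∏ i ∈ S.erase k, ((v k - v i)⁻¹ * (-v i))) * ∏ i ∈ S.erase k, (1 - q ^ (i - γ) * u)) := by
            ring
        _ = -(u - 1) * ((∏ i ∈ S.erase k, ((v k - v i)⁻¹ * (-v i))) *
              ∏ i ∈ S.erase k, (1 - q ^ (i - γ) * u)) := by rw [h1k]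
    -- wcoef in terms of the Lagrange data
    have hw : ∀ k ∈ S, wcoef q α β γ k = C * ∏ i ∈ S.erase k, ((v k - v i)⁻¹ * (-v i)) := by
      intro k hk
      have hkS := hk
      rw [hS, Finset.mem_erase, Finset.mem_Icc] at hkS
      have hγek : γ ∈ (Finset.Icc α (β - 1)).erase k := by
        rw [Finset.mem_erase]
        exact ⟨fun h => hkS.1 h.symm, hγIcc⟩
      have h1 : ∏ i ∈ (Finset.Icc α (β - 1)).erase k, (1 - q ^ (i - k))⁻¹
          = ∏ i ∈ (Finset.Icc α (β - 1)).erase k, ((v k - v i)⁻¹ * (-v i)) :=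
        Finset.prod_congr rfl fun i _ => (hgfact i k).symm
      rw [wcoef, ← hCdef, h1, ← Finset.mul_prod_erase _ _ hγek, Finset.erase_right_comm, ← hS,
        hgfact γ k]
      have hne : (1 - q ^ (γ - k)) ≠ 0 :=
        sub_ne_zero_of_ne fun h => hqz (γ - k) (by omega) h.symm
      rw [← mul_assoc, mul_inv_cancel_right₀ hne]
    -- combine
    have hsum : -(u - 1) * ∑ k ∈ S, (∏ i ∈ S.erase k, ((v k - v i)⁻¹ * (-v i))) *
        ∏ i ∈ S.erase k, (1 - q ^ (i - γ) * u) = 1 - u := by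
      rw [Finset.mul_sum]
      rw [hlagu, hdrop]
      exact (Finset.sum_congr rfl hterm).symm
    have hu1' : -(u - 1) ≠ 0 := by
      intro h
      apply hu1
      have : u - 1 = 0 := by linarith [neg_eq_zero.mp h]
      linarith
    have hsum1 : ∑ k ∈ S, (∏ i ∈ S.erase k, ((v k - v i)⁻¹ * (-v i))) *
        ∏ i ∈ S.erase k, (1 - q ^ (i - γ) * u) = 1 := by
      refine mul_left_cancel₀ hu1' ?_
      rw [hsum]
      ring
    calc ∑ k ∈ S, wcoef q α β γ k * ∏ i ∈ S.erase k, (1 - q ^ (i - γ) * u)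
        = ∑ k ∈ S, C * ((∏ i ∈ S.erase k, ((v k - v i)⁻¹ * (-v i))) *
            ∏ i ∈ S.erase k, (1 - q ^ (i - γ) * u)) := by
          refine Finset.sum_congr rfl fun k hk => ?_
          rw [hw k hk]
          ring
      _ = C * ∑ k ∈ S, (∏ i ∈ S.erase k, ((v k - v i)⁻¹ * (-v i))) *
            ∏ i ∈ S.erase k, (1 - q ^ (i - γ) * u) := by rw [Finset.mul_sum]
      _ = C := by rw [hsum1, mul_one]
  -- extend to u = 1 by continuity
  by_cases hu1 : u = 1
  · subst hu1
    set SF : ℝ → ℝ := fun u => ∑ k ∈ S, wcoef q α β γ k *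
      ∏ i ∈ (S.erase k), (1 - q ^ (i - γ) * u) with hSF
    have hcont : Continuous SF := by
      refine continuous_finset_sum _ fun k _ => Continuous.mul continuous_const ?_
      exact continuous_finset_prod _ fun i _ =>
        continuous_const.sub ((continuous_mul_left _))
    have ht1 : Filter.Tendsto SF (nhdsWithin 1 {(1:ℝ)}ᶜ) (nhds (SF 1)) :=
      (hcont.tendsto 1).mono_left nhdsWithin_le_nhds
    have ht2 : Filter.Tendsto SF (nhdsWithin 1 {(1:ℝ)}ᶜ) (nhds C) := by
      refine Filter.Tendsto.congr' ?_ tendsto_const_nhds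
      exact Filter.eventually_of_mem self_mem_nhdsWithin fun x hx => (hmain x hx).symm
    exact tendsto_nhds_unique ht1 ht2
  · exact hmain u hu1

lemma step1 (hq0 : q ≠ 0) (hqz : ∀ s : ℤ, s ≠ 0 → q ^ s ≠ (1 : ℝ))
    (hαγ : α ≤ γ) (hγβ : γ < β) (hN : α + 1 < β) (u : ℝ)
    (hu : ∀ k ∈ (Finset.Icc α (β - 1)).erase γ, 1 - q ^ (k - γ) * u ≠ 0) :
    R0 q α β γ u = ∑ k ∈ (Finset.Icc α (β - 1)).erase γ,
      wcoef q α β γ k * (1 - q ^ (k - γ) * u)⁻¹ := by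
  set S : Finset ℤ := (Finset.Icc α (β - 1)).erase γ with hS
  have hprodne : ∏ j ∈ S, (1 - q ^ (j - γ) * u) ≠ 0 :=
    Finset.prod_ne_zero_iff.mpr hu
  have hkey := sf_eq hq0 hqz hαγ hγβ hN u
  rw [R0, ← hkey, Finset.sum_div]
  refine Finset.sum_congr rfl fun k hk => ?_
  rw [← Finset.mul_prod_erase _ _ hk]
  have h1 : (1 - q ^ (k - γ) * u) ≠ 0 := hu k hk
  have h2 : ∏ i ∈ S.erase k, (1 - q ^ (i - γ) * u) ≠ 0 :=
    Finset.prod_ne_zero_iff.mpr fun i hi => hu i (Finset.mem_of_mem_erase hi)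
  rw [← hS]
  rw [mul_comm (1 - q ^ (k - γ) * u), ← div_div, mul_div_cancel_right₀ _ h2, div_eq_mul_inv]

end Step1


lemma zpow_succ_nat (q : ℝ) (j : ℕ) : q ^ ((j : ℤ) + 1) = q * q ^ j := by
  rw [show ((j : ℤ) + 1) = ((j + 1 : ℕ) : ℤ) by push_cast; ring, zpow_natCast, pow_succ']

lemma prodIcc (m : ℕ) (c : ℤ) (f : ℤ → ℝ) :
    ∏ i ∈ Finset.Icc c (c + m - 1), f i = ∏ t ∈ range m, f (c + t) := by
  induction m with
  | zero =>
    rw [show (c + (0 : ℕ) - 1 : ℤ) = c - 1 by push_cast; ring,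
      Finset.Icc_eq_empty (by omega)]
    simp
  | succ m ih =>
    have h1 : (c + ((m : ℕ) + 1 : ℕ) - 1 : ℤ) = c + m := by push_cast; ring
    have h2 : Finset.Icc c (c + (m : ℤ)) = insert (c + m) (Finset.Icc c (c + m - 1)) := by
      ext i
      simp only [Finset.mem_Icc, Finset.mem_insert]
      omega
    have h3 : (c + (m : ℤ)) ∉ Finset.Icc c (c + m - 1) := by
      rw [Finset.mem_Icc]; omega
    rw [h1, h2, Finset.prod_insert h3, ih, prod_range_succ]
    ring

lemma prod_erase_Icc (q : ℝ) (hq0 : q ≠ 0) (α b k : ℤ) (hk : α ≤ k) (hkb : k ≤ b) :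
    ∏ i ∈ (Finset.Icc α b).erase k, (1 - q ^ (i - k))
      = (-1) ^ (k - α).toNat * q ^ (-(∑ t ∈ range (k - α).toNat, ((t : ℤ) + 1))) *
        (∏ t ∈ range (k - α).toNat, (1 - q * q ^ t)) * ∏ t ∈ range (b - k).toNat, (1 - q * q ^ t) := by
  set d1 : ℕ := (k - α).toNat with hd1
  set d2 : ℕ := (b - k).toNat with hd2
  have h1 : (Finset.Icc α b).erase k = Finset.Icc α (k - 1) ∪ Finset.Icc (k + 1) b := by
    ext i
    simp only [Finset.mem_erase, Finset.mem_Icc, Finset.mem_union]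
    omega
  have hdisj : Disjoint (Finset.Icc α (k - 1)) (Finset.Icc (k + 1) b) := by
    rw [Finset.disjoint_left]
    intro i hi hi'
    rw [Finset.mem_Icc] at hi hi'
    omega
  rw [h1, Finset.prod_union hdisj]
  have hL : ∏ i ∈ Finset.Icc α (k - 1), (1 - q ^ (i - k))
      = (-1) ^ d1 * q ^ (-(∑ t ∈ range d1, ((t : ℤ) + 1))) * ∏ t ∈ range d1, (1 - q * q ^ t) := by
    have e1 : (k - 1 : ℤ) = α + d1 - 1 := by omega
    rw [e1, prodIcc d1 α (fun i => 1 - q ^ (i - k))]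
    have e2 : ∀ t ∈ range d1, (1 : ℝ) - q ^ (α + (t : ℤ) - k) = 1 - q ^ ((t : ℤ) - d1) := by
      intro t _
      congr 2
      omega
    rw [Finset.prod_congr rfl e2]
    rw [← Finset.prod_range_reflect (fun t => 1 - q ^ ((t : ℤ) - d1)) d1]
    have e3 : ∀ j ∈ range d1, (1 : ℝ) - q ^ (((d1 - 1 - j : ℕ) : ℤ) - d1)
        = (-1) * (q ^ (-((j : ℤ) + 1)) * (1 - q * q ^ j)) := by
      intro j hj
      rw [Finset.mem_range] at hj
      have e4 : ((d1 - 1 - j : ℕ) : ℤ) - d1 = -((j : ℤ) + 1) := by omega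
      rw [e4]
      have e5 : q ^ (-((j : ℤ) + 1)) * (q * q ^ j) = 1 := by
        rw [← zpow_succ_nat q j, ← zpow_add₀ hq0,
          show -((j : ℤ) + 1) + ((j : ℤ) + 1) = 0 by ring, zpow_zero]
      calc (1 : ℝ) - q ^ (-((j : ℤ) + 1))
          = -1 * (q ^ (-((j : ℤ) + 1)) * 1 - q ^ (-((j : ℤ) + 1)) * (q * q ^ j)) := by
            rw [e5]; ring
        _ = -1 * (q ^ (-((j : ℤ) + 1)) * (1 - q * q ^ j)) := by ring
    rw [Finset.prod_congr rfl e3, Finset.prod_mul_distrib, Finset.prod_mul_distrib,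
      Finset.prod_const, card_range, zpow_prod q hq0, ← Finset.sum_neg_distrib]
    ring
  have hR : ∏ i ∈ Finset.Icc (k + 1) b, (1 - q ^ (i - k)) = ∏ t ∈ range d2, (1 - q * q ^ t) := by
    have e1 : (b : ℤ) = (k + 1) + d2 - 1 := by omega
    rw [e1, prodIcc d2 (k + 1) (fun i => 1 - q ^ (i - k))]
    refine Finset.prod_congr rfl fun t _ => ?_
    rw [show (k + 1 + (t : ℤ) - k) = (t : ℤ) + 1 by ring, zpow_succ_nat]
  rw [hL, hR]

lemma dN_eq {N t : ℕ} (h1 : 1 ≤ t) (h2 : t ≤ N) (q : ℝ) :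
    dN N q = (q ^ t - 1) * (aeval q) (Wit t N) := by
  rw [← aeval_DD, Wit_spec h1 h2, map_mul, map_sub, map_pow, aeval_X, map_one]

lemma gb_eval {N k₀ : ℕ} (h : k₀ ≤ N) (q : ℝ) :
    ∏ i ∈ range N, (1 - q * q ^ i)
      = (aeval q) (gb N k₀) * ((∏ i ∈ range k₀, (1 - q * q ^ i)) *
          ∏ i ∈ range (N - k₀), (1 - q * q ^ i)) := by
  have h0 := congrArg (aeval (R := ℤ) q) (gb_mul N k₀ h)
  simpa only [map_mul, aeval_pp] using h0.symm



lemma alg_pos (x e p1 p2 G A : ℝ) (l d1 : ℕ) (hx : x ≠ 0) (h1 : (1:ℝ) - x ≠ 0)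
    (hp1 : p1 ≠ 0) (hp2 : p2 ≠ 0) (he : e ≠ 0) :
    (-1 : ℝ)^l * (1-x)^l * A^l *
        (G * (p1 * p2) * (1 - x⁻¹) * (((-1:ℝ)^d1 * e⁻¹ * p1) * p2)⁻¹ * (x^l * ((1-x)⁻¹)^(l+1)))
      = (-1 : ℝ)^(d1+1+l) * (e * x^l / x) * (G * A^l) := by
  have hc : ((1:ℝ)-x)^l * ((1-x)⁻¹)^(l+1) = (1-x)⁻¹ := by
    rw [inv_pow, pow_succ, mul_inv, ← mul_assoc, mul_inv_cancel₀ (pow_ne_zero l h1), one_mul]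
  have hxx : (1 : ℝ) - x⁻¹ = -((1-x) * x⁻¹) := by field_simp; ring
  rw [hxx]
  have hb : (((-1:ℝ)^d1 * e⁻¹ * p1) * p2)⁻¹ = (-1:ℝ)^d1 * e * p1⁻¹ * p2⁻¹ := by
    rw [mul_inv, mul_inv, mul_inv, inv_inv]
    rcases Nat.even_or_odd d1 with h | h
    · rw [h.neg_one_pow]; norm_num
    · rw [h.neg_one_pow]; norm_num
  rw [hb]
  calc (-1 : ℝ)^l * (1-x)^l * A^l *
        (G * (p1 * p2) * (-((1-x) * x⁻¹)) * ((-1:ℝ)^d1 * e * p1⁻¹ * p2⁻¹) * (x^l * ((1-x)⁻¹)^(l+1)))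
      = (-1 : ℝ)^l * (-1) * (-1:ℝ)^d1 * A^l * G * e * ((1-x)^l * ((1-x)⁻¹)^(l+1) * (1-x)) *
        (p1 * p1⁻¹) * (p2 * p2⁻¹) * (x⁻¹ * x^l) := by ring
    _ = (-1 : ℝ)^(d1+1+l) * (e * x^l / x) * (G * A^l) := by
        rw [hc, mul_inv_cancel₀ hp1, mul_inv_cancel₀ hp2, inv_mul_cancel₀ h1, div_eq_mul_inv]
        ring

lemma alg_neg (x e p1 p2 G A : ℝ) (l d1 : ℕ) (hx : x ≠ 0) (h1 : (1:ℝ) - x ≠ 0)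
    (hp1 : p1 ≠ 0) (hp2 : p2 ≠ 0) (he : e ≠ 0) :
    (-1 : ℝ)^l * (1-x)^l * A^l *
        (G * (p1 * p2) * (1 - x) * (((-1:ℝ)^d1 * e⁻¹ * p1) * p2)⁻¹ *
          ((x⁻¹)^l * ((-1:ℝ)^(l+1) * (x^(l+1) * ((1-x)⁻¹)^(l+1)))))
      = (-1 : ℝ)^(d1+1) * (e * x) * (G * A^l) := by
  have hc : ((1:ℝ)-x)^l * ((1-x)⁻¹)^(l+1) = (1-x)⁻¹ := by
    rw [inv_pow, pow_succ, mul_inv, ← mul_assoc, mul_inv_cancel₀ (pow_ne_zero l h1), one_mul]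
  have hb : (((-1:ℝ)^d1 * e⁻¹ * p1) * p2)⁻¹ = (-1:ℝ)^d1 * e * p1⁻¹ * p2⁻¹ := by
    rw [mul_inv, mul_inv, mul_inv, inv_inv]
    rcases Nat.even_or_odd d1 with h | h
    · rw [h.neg_one_pow]; norm_num
    · rw [h.neg_one_pow]; norm_num
  rw [hb]
  have hs : ((-1:ℝ))^l * (-1:ℝ)^(l+1) = -1 := by
    rw [← pow_add, show l + (l+1) = 2*l+1 by omega, pow_succ,
      Even.neg_one_pow (even_two_mul l), one_mul]
  calc (-1 : ℝ)^l * (1-x)^l * A^l *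
        (G * (p1 * p2) * (1 - x) * ((-1:ℝ)^d1 * e * p1⁻¹ * p2⁻¹) *
          ((x⁻¹)^l * ((-1:ℝ)^(l+1) * (x^(l+1) * ((1-x)⁻¹)^(l+1)))))
      = ((-1 : ℝ)^l * (-1:ℝ)^(l+1)) * ((-1:ℝ)^d1 * (A^l * G * e *
          ((1-x)^l * ((1-x)⁻¹)^(l+1) * (1-x)) * (p1 * p1⁻¹) * (p2 * p2⁻¹) *
          (((x⁻¹)^l * x^l) * x))) := by rw [pow_succ x l]; ring
    _ = (-1 : ℝ)^(d1+1) * (e * x) * (G * A^l) := by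
        rw [hs, hc, mul_inv_cancel₀ hp1, mul_inv_cancel₀ hp2, inv_mul_cancel₀ h1,
          inv_pow, inv_mul_cancel₀ (pow_ne_zero l hx), pow_add, pow_one]
        ring

def nkD (γ k : ℤ) (d1 l : ℕ) : ℕ := if γ < k then d1 + 1 + l else d1 + 1

def zkD (γ k : ℤ) (e1 l : ℕ) : ℤ :=
  if γ < k then (e1 : ℤ) + (k - γ) * ((l : ℤ) - 1) else (e1 : ℤ) + (γ - k)

lemma step3 (q : ℝ) (hq0 : q ≠ 0) (hqz : ∀ s : ℤ, s ≠ 0 → q ^ s ≠ (1 : ℝ))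
    (α β γ k : ℤ) (hαγ : α ≤ γ) (hγβ : γ < β) (l : ℕ)
    (hk : k ∈ (Finset.Icc α (β - 1)).erase γ) :
    (dN (β - α - 1).toNat q) ^ l *
        (wcoef q α β γ k * ((q ^ (k - γ)) ^ l * ((1 - q ^ (k - γ) * 1)⁻¹) ^ (l + 1)))
      = (-1 : ℝ) ^ (nkD γ k (k - α).toNat l) *
          q ^ (zkD γ k (∑ t ∈ range (k - α).toNat, (t + 1)) l) *
          (aeval q) (gb (β - α - 1).toNat (k - α).toNat *
            (Wit (k - γ).natAbs (β - α - 1).toNat) ^ l) := by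
  rw [Finset.mem_erase, Finset.mem_Icc] at hk
  obtain ⟨hkγ, hkα, hkβ⟩ := hk
  set Nn : ℕ := (β - α - 1).toNat with hNn
  set d1 : ℕ := (k - α).toNat with hd1
  set d2 : ℕ := (β - 1 - k).toNat with hd2def
  set tk : ℕ := (k - γ).natAbs with htk
  set e1 : ℕ := ∑ t ∈ range d1, (t + 1) with he1
  have htk1 : 1 ≤ tk := by omega
  have htkN : tk ≤ Nn := by omega
  have hd1N : d1 ≤ Nn := by omega
  have hd2 : Nn - d1 = d2 := by omega
  set AW : ℝ := (aeval q) (Wit tk Nn) with hAW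
  set GB : ℝ := (aeval q) (gb Nn d1) with hGBdef
  have hfacne : ∀ i : ℕ, (1 : ℝ) - q * q ^ i ≠ 0 := fun i =>
    sub_ne_zero_of_ne fun h => hqz ((i : ℤ) + 1) (by omega) (by rw [zpow_succ_nat]; exact h.symm)
  have hCne : ∀ n : ℕ, (∏ i ∈ range n, (1 - q * q ^ i)) ≠ 0 := fun n =>
    Finset.prod_ne_zero_iff.mpr fun i _ => hfacne i
  have hqtne : (q : ℝ) ^ tk ≠ 0 := pow_ne_zero _ hq0
  have hqe1ne : (q : ℝ) ^ e1 ≠ 0 := pow_ne_zero _ hq0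
  have h1mne : (1 : ℝ) - q ^ tk ≠ 0 := sub_ne_zero_of_ne fun h =>
    hqz (tk : ℤ) (by omega) (by rw [zpow_natCast]; exact h.symm)
  have hGB : ∏ i ∈ range Nn, (1 - q * q ^ i)
      = GB * ((∏ i ∈ range d1, (1 - q * q ^ i)) * ∏ i ∈ range d2, (1 - q * q ^ i)) := by
    rw [hGBdef, ← hd2]
    exact gb_eval hd1N q
  have hdN' : dN Nn q = (-(1 - q ^ tk)) * AW := by
    rw [dN_eq htk1 htkN q, hAW]
    ring
  have hdNl : (dN Nn q) ^ l = (-1 : ℝ) ^ l * (1 - q ^ tk) ^ l * AW ^ l := by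
    rw [hdN', mul_pow, neg_pow]
  have hcanc : ((1 : ℝ) - q ^ tk) ^ l * (((1 - q ^ tk))⁻¹) ^ (l + 1) = (1 - q ^ tk)⁻¹ := by
    rw [inv_pow, pow_succ, mul_inv, ← mul_assoc, mul_inv_cancel₀ (pow_ne_zero l h1mne), one_mul]
  have hsumcast : (∑ t ∈ range d1, ((t : ℤ) + 1)) = (e1 : ℤ) := by
    rw [he1]
    push_cast
    ring
  have hprod := prod_erase_Icc q hq0 α (β - 1) k hkα hkβ
  rw [← hd1, ← hd2def, hsumcast, zpow_neg, zpow_natCast] at hprod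
  have hwc : wcoef q α β γ k = (∏ i ∈ range Nn, (1 - q * q ^ i)) * (1 - q ^ (γ - k)) *
      ((-1) ^ d1 * (q ^ e1)⁻¹ * (∏ t ∈ range d1, (1 - q * q ^ t)) *
        ∏ t ∈ range d2, (1 - q * q ^ t))⁻¹ := by
    rw [wcoef, ← hNn]
    congr 1
    rw [Finset.prod_inv_distrib, hprod]
  have haev : (aeval q) (gb Nn d1 * (Wit tk Nn) ^ l) = GB * AW ^ l := by
    rw [map_mul, map_pow, hAW, hGBdef]
  rw [haev, hwc, hGB, hdNl]
  by_cases hcase : γ < k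
  · have hkt : (k - γ : ℤ) = (tk : ℤ) := by omega
    have hgk : (γ - k : ℤ) = -(tk : ℤ) := by omega
    rw [nkD, zkD, if_pos hcase, if_pos hcase, hkt, hgk, zpow_neg]
    simp only [zpow_natCast, mul_one]
    rw [show (e1 : ℤ) + (tk : ℤ) * ((l : ℤ) - 1) = ((e1 + tk * l : ℕ) : ℤ) - ((tk : ℕ) : ℤ) by
      push_cast; ring]
    rw [zpow_sub₀ hq0]
    simp only [zpow_natCast]
    rw [show (q:ℝ)^(e1 + tk*l) = q^e1 * (q^tk)^l by rw [pow_add, pow_mul]]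
    exact alg_pos (q^tk) (q^e1) _ _ GB AW l d1 hqtne h1mne (hCne d1) (hCne d2) hqe1ne
  · have hkt : (γ - k : ℤ) = (tk : ℤ) := by omega
    have hkt' : (k - γ : ℤ) = -(tk : ℤ) := by omega
    rw [nkD, zkD, if_neg hcase, if_neg hcase, hkt, hkt', zpow_neg]
    rw [zpow_add₀ hq0]
    simp only [zpow_natCast, mul_one]
    have hx : (1 : ℝ) - (q ^ tk)⁻¹ = -((1 - q ^ tk) * (q ^ tk)⁻¹) := by
      field_simp; ring
    have hy : (((1 : ℝ) - (q ^ tk)⁻¹)⁻¹) ^ (l + 1)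
        = (-1 : ℝ) ^ (l + 1) * ((q ^ tk) ^ (l + 1) * (((1 - q ^ tk))⁻¹) ^ (l + 1)) := by
      rw [hx, inv_neg, mul_inv, inv_inv, neg_pow, mul_pow]
      ring
    rw [hy]
    exact alg_neg (q^tk) (q^e1) _ _ GB AW l d1 hqtne h1mne (hCne d1) (hCne d2) hqe1ne

  
lemma cancel_fac (c d w a b : ℝ) (hc : c ≠ 0) :
    d / c * (w * (c * a * b)) = d * (w * (a * b)) := by
  field_simp

lemma iteratedDeriv_zero_fun : ∀ (l : ℕ) (x : ℝ), iteratedDeriv l (fun _ : ℝ => (0:ℝ)) x = 0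
  | 0, x => by simp
  | (n+1), x => by
    rw [iteratedDeriv_succ',
      show deriv (fun _ : ℝ => (0:ℝ)) = fun _ => (0:ℝ) from funext fun y => deriv_const y 0]
    exact iteratedDeriv_zero_fun n x

lemma iteratedDeriv_one_fun (l : ℕ) (x : ℝ) :
    iteratedDeriv l (fun _ : ℝ => (1:ℝ)) x = if l = 0 then 1 else 0 := by
  cases l with
  | zero => simp
  | succ n =>
    rw [iteratedDeriv_succ',
      show deriv (fun _ : ℝ => (1:ℝ)) = fun _ => (0:ℝ) from funext fun y => deriv_const y 1]
    simp [iteratedDeriv_zero_fun]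

end Stmt15Aux

open Stmt15Aux

/-- `(d_{β−α−1}(q)^l / l!) · (d^l/du^l R₀)(u)|_{u=1} ∈ ℤ[q, q⁻¹]`,
uniformly in `q` (not a root of unity). -/
theorem stmt15 (α β γ : ℤ) (hαγ : α ≤ γ) (hγβ : γ < β) (l : ℕ) :
    ∃ P : Polynomial ℤ, ∃ m : ℕ, ∀ q : ℝ, q ≠ 0 → (∀ i : ℕ, 1 ≤ i → q ^ i ≠ 1) →
      (dN (β - α - 1).toNat q) ^ l / (l.factorial : ℝ) * iteratedDeriv l (R0 q α β γ) 1
        = (Polynomial.aeval q P) / q ^ m := by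
  classical
  by_cases hsp : β = α + 1
  · -- degenerate case: `R0` is the constant function 1
    subst hsp
    have hγ : γ = α := by omega
    subst hγ
    refine ⟨if l = 0 then 1 else 0, 0, fun q hq0 hq1 => ?_⟩
    have hR : R0 q γ (γ + 1) γ = fun _ : ℝ => (1:ℝ) := by
      funext u
      rw [R0]
      rw [show (γ + 1 - γ - 1 : ℤ) = 0 by ring, show (γ + 1 - 1 : ℤ) = γ by ring]
      simp
    rw [hR, iteratedDeriv_one_fun]
    have hdN : dN (γ + 1 - γ - 1).toNat q = 1 := by
      rw [show (γ + 1 - γ - 1 : ℤ) = 0 by ring]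
      rw [dN]
      simp
    rw [hdN]
    by_cases hl : l = 0
    · subst hl; simp
    · rw [if_neg hl, if_neg hl]
      simp
  · have hN : α + 1 < β := by omega
    set S : Finset ℤ := (Finset.Icc α (β - 1)).erase γ with hS
    set zk : ℤ → ℤ := fun k => zkD γ k (∑ t ∈ range (k - α).toNat, (t + 1)) l with hzk
    set m : ℕ := ∑ k ∈ S, (zk k).natAbs with hm
    set pk : ℤ → Polynomial ℤ := fun k => gb (β - α - 1).toNat (k - α).toNat *
      (Wit (k - γ).natAbs (β - α - 1).toNat) ^ l with hpk
    refine ⟨∑ k ∈ S, (-1) ^ (nkD γ k (k - α).toNat l) *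
        (Polynomial.X : Polynomial ℤ) ^ ((zk k + m).toNat) * pk k, m, fun q hq0 hq1 => ?_⟩
    have hqz : ∀ s : ℤ, s ≠ 0 → q ^ s ≠ (1:ℝ) := by
      intro s hs h
      rcases lt_or_gt_of_ne hs with h' | h'
      · refine hq1 (-s).toNat (by omega) ?_
        rw [← zpow_natCast, show (((-s).toNat : ℤ)) = -s by omega, zpow_neg, h, inv_one]
      · refine hq1 s.toNat (by omega) ?_
        rw [← zpow_natCast, show ((s.toNat : ℤ)) = s by omega, h]
    have h1k : ∀ k ∈ S, (1:ℝ) - q ^ (k - γ) * 1 ≠ 0 := by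
      intro k hk
      rw [mul_one]
      refine sub_ne_zero_of_ne fun h => hqz (k - γ) ?_ h.symm
      rw [hS, Finset.mem_erase] at hk
      omega
    have h1k' : (1:ℝ) ∈ {x : ℝ | ∀ k ∈ S, 1 - q ^ (k - γ) * x ≠ 0} := h1k
    have hEv : R0 q α β γ =ᶠ[nhds 1]
        fun u => ∑ k ∈ S, wcoef q α β γ k * (1 - q ^ (k - γ) * u)⁻¹ := by
      refine Filter.eventually_of_mem
        ((isOpen_cond S (fun k => q ^ (k - γ))).mem_nhds h1k')
        (fun u hu => step1 hq0 hqz hαγ hγβ hN u hu)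
    have hID : iteratedDeriv l (R0 q α β γ) 1 = ∑ k ∈ S, wcoef q α β γ k *
        ((l.factorial : ℝ) * (q ^ (k - γ)) ^ l * ((1 - q ^ (k - γ) * 1)⁻¹) ^ (l + 1)) := by
      rw [hEv.iteratedDeriv_eq l]
      exact iteratedDeriv_sum_inv S (fun k => q ^ (k - γ)) (wcoef q α β γ) l 1 h1k
    have hfac : (l.factorial : ℝ) ≠ 0 := Nat.cast_ne_zero.mpr l.factorial_ne_zero
    rw [hID, Finset.mul_sum]
    rw [map_sum, Finset.sum_div]
    refine Finset.sum_congr rfl fun k hk => ?_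
    have h3 := step3 q hq0 hqz α β γ k hαγ hγβ l (hS ▸ hk)
    have hstep : dN (β - α - 1).toNat q ^ l / (l.factorial : ℝ) *
        (wcoef q α β γ k * ((l.factorial : ℝ) * (q ^ (k - γ)) ^ l *
          ((1 - q ^ (k - γ) * 1)⁻¹) ^ (l + 1)))
        = dN (β - α - 1).toNat q ^ l * (wcoef q α β γ k * ((q ^ (k - γ)) ^ l *
          ((1 - q ^ (k - γ) * 1)⁻¹) ^ (l + 1))) := by
      exact cancel_fac _ _ _ _ _ hfac
    rw [hstep, h3]
    have hmk : (zk k).natAbs ≤ m := by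
      rw [hm]
      exact Finset.single_le_sum (f := fun k => (zk k).natAbs) (fun _ _ => Nat.zero_le _) hk
    have htn : (((zk k + m).toNat : ℤ)) = zk k + m := by omega
    have hqm : q ^ ((zk k + m).toNat) = q ^ (zk k) * q ^ (m : ℕ) := by
      rw [← zpow_natCast q ((zk k + m).toNat), htn, zpow_add₀ hq0, zpow_natCast]
    have hqmne : (q : ℝ) ^ (m : ℕ) ≠ 0 := pow_ne_zero _ hq0
    simp only [hpk, map_mul, map_pow, map_neg, map_one, Polynomial.aeval_X]
    rw [hqm]
    simp only [hzk]
    rw [eq_div_iff hqmne]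
    ring
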